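/- Let f ∈ Homeo⁺(S¹) be n-savage, with intervals I_1^-, I_1^+, …, I_n^-, I_n^+ in cyclic order, pairwise disjoint closures, and f(S¹ ∖ ⋃_j \overline{I_j^-}) = ⋃_j I_j^+. Then for any nonzero integer k, f^k is also n-savage; moreover rot(f^n) = 0 and f has at least one periodic point in each interval I_j^+ and each I_j^-. -/

import Mathlib

open Set Function Filter MeasureTheory

/-- An orientation-preserving homeomorphism of `ℝ` commuting with `x ↦ x + 1`,
i.e. a lift of an orientation-preserving circle homeomorphism. -/
structure HomeoZR : Type where
  toFun : ℝ → ℝ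
  invFun : ℝ → ℝ
  left_inv : Function.LeftInverse invFun toFun
  right_inv : Function.RightInverse invFun toFun
  strictMono : StrictMono toFun
  map_add_one : ∀ x, toFun (x + 1) = toFun x + 1

namespace HomeoZR

/-- The identity. -/
protected def id : HomeoZR :=
  ⟨_root_.id, _root_.id, fun _ => rfl, fun _ => rfl, strictMono_id, fun _ => rfl⟩

/-- Composition `f ∘ g`. -/
protected def comp (f g : HomeoZR) : HomeoZR where
  toFun := f.toFun ∘ g.toFun
  invFun := g.invFun ∘ f.invFun
  left_inv := fun x => by
    show g.invFun (f.invFun (f.toFun (g.toFun x))) = x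
    rw [f.left_inv, g.left_inv]
  right_inv := fun x => by
    show f.toFun (g.toFun (g.invFun (f.invFun x))) = x
    rw [g.right_inv, f.right_inv]
  strictMono := f.strictMono.comp g.strictMono
  map_add_one := fun x => by
    show f.toFun (g.toFun (x + 1)) = f.toFun (g.toFun x) + 1
    rw [g.map_add_one, f.map_add_one]

/-- Inverse. -/
protected def symm (f : HomeoZR) : HomeoZR where
  toFun := f.invFun
  invFun := f.toFun
  left_inv := f.right_inv
  right_inv := f.left_inv
  strictMono := by
    intro x y hxy
    rcases lt_trichotomy (f.invFun x) (f.invFun y) with h | h | h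
    · exact h
    · exact absurd (by rw [← f.right_inv x, ← f.right_inv y, h]) (ne_of_lt hxy)
    · have h2 := f.strictMono h
      rw [f.right_inv, f.right_inv] at h2
      exact absurd h2 (lt_asymm hxy)
  map_add_one := fun x => by
    have h1 : f.invFun (f.toFun (f.invFun x + 1)) = f.invFun (x + 1) := by
      rw [f.map_add_one, f.right_inv]
    rw [f.left_inv] at h1
    exact h1.symm

/-- The associated monotone degree-one lift. -/
def toLift (f : HomeoZR) : CircleDeg1Lift :=
  ⟨⟨f.toFun, f.strictMono.monotone⟩, f.map_add_one⟩

/-- The translation number `rot̃(f)`. -/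
noncomputable def transNum (f : HomeoZR) : ℝ :=
  f.toLift.translationNumber

/-- The canonical lift of the underlying circle homeomorphism: the lift whose
translation number lies in `[0,1)`, as a plain function. -/
noncomputable def canon (f : HomeoZR) : ℝ → ℝ :=
  fun x => f.toFun x - (⌊f.transNum⌋ : ℝ)

/-- The periodic points of the underlying circle homeomorphism, as a
`ℤ`-periodic subset of `ℝ`. -/
def Per (f : HomeoZR) : Set ℝ :=
  {x | ∃ n : ℕ, 0 < n ∧ ∃ m : ℤ, f.toFun^[n] x = x + m}

/-- The fixed points of the underlying circle homeomorphism, as a subset of `ℝ`. -/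
def FixS (f : HomeoZR) : Set ℝ :=
  {x | ∃ m : ℤ, f.toFun x = x + m}

/-- `q(f)`: the minimal period of the underlying circle homeomorphism. -/
noncomputable def q (f : HomeoZR) : ℕ :=
  sInf {n : ℕ | 0 < n ∧ ∃ x : ℝ, ∃ m : ℤ, f.toFun^[n] x = x + m}

/-- `p(f)`: the least `p ≥ 0` with `rot(f) = p / q(f)` mod `ℤ`. -/
noncomputable def p (f : HomeoZR) : ℕ :=
  sInf {p : ℕ | ∃ m : ℤ, f.transNum = (p : ℝ) / (f.q : ℝ) + (m : ℝ)}

/-- Natural powers. -/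
protected def npow (f : HomeoZR) : ℕ → HomeoZR
  | 0 => HomeoZR.id
  | n + 1 => (f.npow n).comp f

/-- Integer powers. -/
protected def zpow (f : HomeoZR) (k : ℤ) : HomeoZR :=
  if 0 ≤ k then f.npow k.toNat else f.symm.npow (-k).toNat

end HomeoZR

/-- `f` has rational rotation number. -/
def RatRot (f : HomeoZR) : Prop := ∃ r : ℚ, f.transNum = (r : ℝ)

/-- `F` is a positive one-parameter family (one-parameter group) commuting with `f`:
for `t ≠ 0` the fixed set of `F t` is the frontier of `Per f`, and for `t > 0` the
canonical lift of `F t` moves every point off the frontier strictly to the right. -/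
def PosFamily (f : HomeoZR) (F : ℝ → HomeoZR) : Prop :=
  (∀ s t, (F (s + t)).toFun = (F s).toFun ∘ (F t).toFun) ∧
  (∀ t, (F t).toFun ∘ f.toFun = f.toFun ∘ (F t).toFun) ∧
  (∀ t, t ≠ 0 → (F t).FixS = frontier f.Per) ∧
  (∀ t, 0 < t → ∀ x, x ∉ frontier f.Per → x < (F t).canon x)

/-- `δ_{f,g}(x,t)`, where `F` is a positive one-parameter family commuting with `f`. -/
noncomputable def delta (F : ℝ → HomeoZR) (g : HomeoZR) (x t : ℝ) : ℝ :=
  ((F t).canon ∘ g.canon)^[g.q] x - x - (g.p : ℝ)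

/-- Persistent periodic points. -/
def Pset (F : ℝ → HomeoZR) (g : HomeoZR) : Set ℝ := {x | ∀ t, delta F g x t = 0}

/-- Never-periodic points. -/
def Nset (F : ℝ → HomeoZR) (g : HomeoZR) : Set ℝ := {x | ∀ t, delta F g x t ≠ 0}

/-- Points periodic at a unique time. -/
def Uset (F : ℝ → HomeoZR) (g : HomeoZR) : Set ℝ := {x | ∃! t, delta F g x t = 0}

/-- `x` has a finite orbit in the circle under the group generated by `f` and `g`. -/
def FiniteOrbit (f g : HomeoZR) (x : ℝ) : Prop :=
  ∃ S : Set ℝ, S.Finite ∧ x ∈ S ∧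
    (∀ y ∈ S, ∃ z ∈ S, ∃ m : ℤ, f.toFun y = z + m) ∧
    (∀ y ∈ S, ∃ z ∈ S, ∃ m : ℤ, g.toFun y = z + m)

/-- `τ(f_1, …, f_n) = rot̃(f_n ∘ ⋯ ∘ f_1) − Σ rot̃(f_i)`. -/
noncomputable def tau (L : List HomeoZR) : ℝ :=
  (L.foldl (fun h u => u.comp h) HomeoZR.id).transNum
    - (L.map HomeoZR.transNum).sum

/-- The `ℤ`-saturated open interval over `(a,b)` (the lift of a circle arc). -/
def liftedIoo (a b : ℝ) : Set ℝ := ⋃ m : ℤ, Set.Ioo (a + m) (b + m)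

/-- The `ℤ`-saturated closed interval over `[a,b]` (the lift of a closed circle arc). -/
def liftedIcc (a b : ℝ) : Set ℝ := ⋃ m : ℤ, Set.Icc (a + m) (b + m)

/-- Witness data that `f` is `n`-savage: `2n` open arcs `I₁⁻, I₁⁺, …, Iₙ⁻, Iₙ⁺` in
cyclic order with pairwise disjoint closures (encoded by `4n` cyclically ordered
endpoints, all within one fundamental domain) such that
`f(S¹ ∖ ⋃ closure Iⱼ⁻) = ⋃ Iⱼ⁺`. -/
def SavageData (n : ℕ) (f : HomeoZR) (c : Fin (4 * n) → ℝ) : Prop :=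
  StrictMono c ∧ (∀ i j : Fin (4 * n), c i < c j + 1) ∧
  f.toFun '' (⋃ j : Fin n,
      liftedIcc (c ⟨4 * j.1, by have := j.2; omega⟩)
        (c ⟨4 * j.1 + 1, by have := j.2; omega⟩))ᶜ
    = ⋃ j : Fin n,
        liftedIoo (c ⟨4 * j.1 + 2, by have := j.2; omega⟩)
          (c ⟨4 * j.1 + 3, by have := j.2; omega⟩)

/-- `f` is `n`-savage. -/
def IsSavage (n : ℕ) (f : HomeoZR) : Prop := ∃ c, SavageData n f c

namespace SavAux

open Set

/-- Abstracted savage data with `ℤ`-indexed endpoints. -/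
structure Good (n : ℕ) (g : ℝ → ℝ) (d : ℤ → ℝ) : Prop where
  hn : 0 < n
  dmono : StrictMono d
  dper : ∀ k : ℤ, d (k + 4*n) = d k + 1
  gmono : StrictMono g
  gsurj : Function.Surjective g
  gper : ∀ x : ℝ, g (x + 1) = g x + 1
  himg : g '' (⋃ a : ℤ, Icc (d (4*a)) (d (4*a+1)))ᶜ = ⋃ a : ℤ, Ioo (d (4*a+2)) (d (4*a+3))

variable {n : ℕ} {g : ℝ → ℝ} {d : ℤ → ℝ}

theorem Good.dper_int (h : Good n g d) (k : ℤ) : ∀ m : ℤ, d (k + 4*n*m) = d k + m := by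
  intro m
  induction m using Int.induction_on with
  | zero => simp
  | succ i ih =>
      have : k + 4*n*(i+1) = (k + 4*n*i) + 4*n := by ring
      rw [this, h.dper, ih]; push_cast; ring
  | pred i ih =>
      have : k + 4*n*(-i) = (k + 4*n*(-i-1)) + 4*n := by ring
      rw [this, h.dper] at ih
      have := ih
      rw [show k + 4*(n:ℤ)*(-i-1) = k + 4*n*(-(i:ℤ)-1) by ring]
      push_cast at this ⊢
      linarith

theorem Good.gper_int (h : Good n g d) (x : ℝ) : ∀ m : ℤ, g (x + m) = g x + m := by
  intro m
  induction m using Int.induction_on with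
  | zero => simp
  | succ i ih => push_cast; rw [show x + ((i:ℝ)+1) = (x + i) + 1 by ring, h.gper]; push_cast at ih; rw [ih]; ring
  | pred i ih =>
      push_cast at ih ⊢
      have key := h.gper (x + (-(i:ℝ) - 1))
      rw [show x + (-(i:ℝ) - 1) + 1 = x + -(i:ℝ) by ring, ih] at key
      linarith [key]

noncomputable def Good.iso (h : Good n g d) : ℝ ≃o ℝ :=
  StrictMono.orderIsoOfSurjective g h.gmono h.gsurj

theorem Good.gcont (h : Good n g d) : Continuous g := by
  have := h.iso.continuous
  simpa [Good.iso] using this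

theorem Good.gIoo (h : Good n g d) (u v : ℝ) : g '' Ioo u v = Ioo (g u) (g v) := by
  have := h.iso.image_Ioo u v
  simpa [Good.iso] using this

theorem Good.gIcc (h : Good n g d) (u v : ℝ) : g '' Icc u v = Icc (g u) (g v) := by
  have := h.iso.image_Icc u v
  simpa [Good.iso] using this

theorem Good.arch (h : Good n g d) (x : ℝ) : ∃ a : ℤ, d (4*a) ≤ x ∧ x < d (4*a+4) := by
  have hkey : ∀ m : ℤ, d (4*(n*m)) = d 0 + m := by
    intro m
    have := h.dper_int 0 m
    rw [show (0:ℤ) + 4*n*m = 4*((n:ℤ)*m) by ring] at this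
    exact this
  have hinh : ∃ a : ℤ, d (4*a) ≤ x := by
    refine ⟨n * ⌊x - d 0⌋, ?_⟩
    rw [hkey]
    have := Int.floor_le (x - d 0)
    linarith
  have hbdd : ∃ b : ℤ, ∀ a : ℤ, d (4*a) ≤ x → a ≤ b := by
    refine ⟨n * (⌈x - d 0⌉ + 1), ?_⟩
    intro a ha
    by_contra hlt
    push_neg at hlt
    have h1 : d (4*((n:ℤ) * (⌈x - d 0⌉ + 1))) ≤ d (4*a) := le_of_lt (h.dmono (by omega))
    rw [hkey] at h1
    have := Int.le_ceil (x - d 0)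
    push_cast at h1
    linarith
  obtain ⟨a, ha, hmax⟩ := Int.exists_greatest_of_bdd hbdd hinh
  refine ⟨a, ha, ?_⟩
  by_contra hc
  push_neg at hc
  have : a + 1 ≤ a := hmax (a+1) (by rw [show 4*(a+1) = 4*a+4 by ring]; exact hc)
  omega

theorem Good.compl_eq (h : Good n g d) :
    (⋃ a : ℤ, Icc (d (4*a)) (d (4*a+1)))ᶜ = ⋃ a : ℤ, Ioo (d (4*a+1)) (d (4*a+4)) := by
  ext x
  simp only [mem_compl_iff, mem_iUnion, mem_Icc, mem_Ioo, not_exists, not_and]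
  constructor
  · intro hx
    obtain ⟨a, h1, h2⟩ := h.arch x
    have h3 : ¬ x ≤ d (4*a+1) := hx a h1
    push_neg at h3
    exact ⟨a, h3, h2⟩
  · rintro ⟨a, h1, h2⟩ b hb
    by_contra hle
    rcases le_or_gt b a with hba | hab
    · have : d (4*b+1) ≤ d (4*a+1) := h.dmono.monotone (by omega)
      linarith
    · have : d (4*a+4) ≤ d (4*b) := h.dmono.monotone (by omega)
      linarith


theorem Good.himg' (h : Good n g d) :
    ⋃ a : ℤ, Ioo (g (d (4*a+1))) (g (d (4*a+4))) = ⋃ a : ℤ, Ioo (d (4*a+2)) (d (4*a+3)) := by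
  have H := h.himg
  rw [h.compl_eq, Set.image_iUnion] at H
  simp only [h.gIoo] at H
  exact H

theorem Good.exists_t0 (h : Good n g d) :
    ∃ t : ℤ, ∀ a : ℤ,
      g '' Ioo (d (4*a+1)) (d (4*a+4)) = Ioo (d (4*(a+t)+2)) (d (4*(a+t)+3)) := by
  have dlt : ∀ {i j : ℤ}, d i < d j ↔ i < j := fun {i j} => h.dmono.lt_iff_lt
  have gL : ∀ a : ℤ, g (d (4*a+1)) < g (d (4*a+4)) := fun a => h.gmono (h.dmono (by omega))
  have sel : ∀ a : ℤ, ∃ b : ℤ, d (4*b+2) ≤ g (d (4*a+1)) ∧ g (d (4*a+4)) ≤ d (4*b+3) := by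
    intro a
    have hsub : Ioo (g (d (4*a+1))) (g (d (4*a+4))) ⊆ ⋃ b : ℤ, Ioo (d (4*b+2)) (d (4*b+3)) := by
      rw [← h.himg']
      intro y hy
      exact mem_iUnion.2 ⟨a, hy⟩
    obtain ⟨y, hy⟩ := nonempty_Ioo.2 (gL a)
    obtain ⟨b, hb⟩ := mem_iUnion.1 (hsub hy)
    refine ⟨b, ?_, ?_⟩
    · by_contra hcon; push_neg at hcon
      have hmem : d (4*b+2) ∈ Ioo (g (d (4*a+1))) (g (d (4*a+4))) :=
        ⟨hcon, lt_trans hb.1 hy.2⟩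
      obtain ⟨b', hb'⟩ := mem_iUnion.1 (hsub hmem)
      have h1 := dlt.1 hb'.1
      have h2 := dlt.1 hb'.2
      omega
    · by_contra hcon; push_neg at hcon
      have hmem : d (4*b+3) ∈ Ioo (g (d (4*a+1))) (g (d (4*a+4))) :=
        ⟨lt_trans hy.1 hb.2, hcon⟩
      obtain ⟨b', hb'⟩ := mem_iUnion.1 (hsub hmem)
      have h1 := dlt.1 hb'.1
      have h2 := dlt.1 hb'.2
      omega
  choose b hb using sel
  have uniq : ∀ {y : ℝ} {b1 b2 : ℤ}, d (4*b1+2) < y → y < d (4*b1+3) →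
      d (4*b2+2) < y → y < d (4*b2+3) → b1 = b2 := by
    intro y b1 b2 p1 p2 p3 p4
    have q1 := dlt.1 (lt_trans p1 p4)
    have q2 := dlt.1 (lt_trans p3 p2)
    omega
  have inside : ∀ (a : ℤ) (y : ℝ), g (d (4*a+1)) < y → y < g (d (4*a+4)) →
      d (4*(b a)+2) < y ∧ y < d (4*(b a)+3) := by
    intro a y p1 p2
    exact ⟨lt_of_le_of_lt (hb a).1 p1, lt_of_lt_of_le p2 (hb a).2⟩
  have mono : ∀ {a a' : ℤ}, a < a' → b a ≤ b a' := by
    intro a a' haa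
    by_contra hcon; push_neg at hcon
    obtain ⟨x, hx⟩ := nonempty_Ioo.2 (h.dmono (show 4*a+1 < 4*a+4 by omega))
    obtain ⟨x', hx'⟩ := nonempty_Ioo.2 (h.dmono (show 4*a'+1 < 4*a'+4 by omega))
    have hgx : d (4*(b a)+2) < g x := lt_of_le_of_lt (hb a).1 (h.gmono hx.1)
    have hgx' : g x' < d (4*(b a')+3) := lt_of_lt_of_le (h.gmono hx'.2) (hb a').2
    have hcc : d (4*(b a')+3) < d (4*(b a)+2) := h.dmono (by omega)
    have hxx' : x < x' :=
      lt_of_lt_of_le hx.2 (le_trans (h.dmono.monotone (show 4*a+4 ≤ 4*a'+1 by omega)) (le_of_lt hx'.1))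
    have := h.gmono hxx'
    linarith
  have per : ∀ a : ℤ, b (a + n) = b a + n := by
    intro a
    obtain ⟨y, hy⟩ := nonempty_Ioo.2 (gL (a+n))
    have hin := inside (a+n) y hy.1 hy.2
    have e1 : d (4*(a+(n:ℤ))+1) = d (4*a+1) + 1 := by
      rw [show 4*(a+(n:ℤ))+1 = (4*a+1) + 4*n by ring, h.dper]
    have e4 : d (4*(a+(n:ℤ))+4) = d (4*a+4) + 1 := by
      rw [show 4*(a+(n:ℤ))+4 = (4*a+4) + 4*n by ring, h.dper]
    have k1 : d (4*(b a + n)+2) < y := by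
      have e : d (4*(b a + (n:ℤ))+2) = d (4*(b a)+2) + 1 := by
        rw [show 4*(b a+(n:ℤ))+2 = (4*(b a)+2) + 4*n by ring, h.dper]
      have hy1 : g (d (4*a+1)) + 1 < y := by
        have := hy.1
        rw [e1, h.gper] at this
        exact this
      have := (hb a).1
      rw [e]; linarith
    have k2 : y < d (4*(b a + n)+3) := by
      have e : d (4*(b a + (n:ℤ))+3) = d (4*(b a)+3) + 1 := by
        rw [show 4*(b a+(n:ℤ))+3 = (4*(b a)+3) + 4*n by ring, h.dper]
      have hy2 : y < g (d (4*a+4)) + 1 := by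
        have := hy.2
        rw [e4, h.gper] at this
        exact this
      have := (hb a).2
      rw [e]; linarith
    exact uniq hin.1 hin.2 k1 k2
  have surj : ∀ v : ℤ, ∃ a, b a = v := by
    intro v
    obtain ⟨y, hy⟩ := nonempty_Ioo.2 (h.dmono (show 4*v+2 < 4*v+3 by omega))
    have hmem : y ∈ ⋃ a : ℤ, Ioo (g (d (4*a+1))) (g (d (4*a+4))) := by
      rw [h.himg']
      exact mem_iUnion.2 ⟨v, hy⟩
    obtain ⟨a, ha⟩ := mem_iUnion.1 hmem
    have hin := inside a y ha.1 ha.2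
    exact ⟨a, uniq hin.1 hin.2 hy.1 hy.2⟩
  have step_le : ∀ a : ℤ, b (a+1) ≤ b a + 1 := by
    intro a
    by_contra hcon; push_neg at hcon
    obtain ⟨a'', ha''⟩ := surj (b a + 1)
    have h1 : a < a'' := by
      by_contra hle; push_neg at hle
      rcases lt_or_eq_of_le hle with hlt | heq
      · have := mono hlt; omega
      · rw [heq] at ha''; omega
    have h2 : a'' < a+1 := by
      by_contra hle; push_neg at hle
      rcases lt_or_eq_of_le hle with hlt | heq
      · have := mono hlt; omega
      · rw [← heq] at ha''; omega
    omega
  have chain : ∀ (a : ℤ) (m : ℕ), b (a + m) ≤ b a + m := by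
    intro a m
    induction m with
    | zero => simp
    | succ i ih =>
        have e : a + ((i+1:ℕ):ℤ) = (a + (i:ℕ)) + 1 := by push_cast; ring
        rw [e]
        have := step_le (a + (i:ℕ))
        push_cast
        push_cast at ih
        omega
  have step_ge : ∀ a : ℤ, b a + 1 ≤ b (a+1) := by
    intro a
    have h1 : b (a + n) = b a + n := per a
    have h2 := chain (a+1) (n-1)
    have e0 : ((n-1:ℕ):ℤ) = (n:ℤ)-1 := by have := h.hn; omega
    have e : (a+1) + ((n-1:ℕ):ℤ) = a + n := by omega
    rw [e] at h2
    omega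
  have hb0 : ∀ a : ℤ, b a = a + b 0 := by
    intro a
    induction a using Int.induction_on with
    | zero => omega
    | succ i ih =>
        have := step_le (i:ℤ)
        have := step_ge (i:ℤ)
        push_cast at ih ⊢
        omega
    | pred i ih =>
        have hs1 := step_le (-(i:ℤ)-1)
        have hs2 := step_ge (-(i:ℤ)-1)
        have e : (-(i:ℤ)-1) + 1 = -(i:ℤ) := by ring
        rw [e] at hs1 hs2
        push_cast at ih ⊢
        omega
  refine ⟨b 0, fun a => ?_⟩
  rw [h.gIoo]
  apply Subset.antisymm
  · intro y hy
    have hin := inside a y hy.1 hy.2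
    rw [hb0 a] at hin
    exact ⟨hin.1, hin.2⟩
  · intro y hy
    have hmem : y ∈ ⋃ a' : ℤ, Ioo (g (d (4*a'+1))) (g (d (4*a'+4))) := by
      rw [h.himg']
      exact mem_iUnion.2 ⟨a + b 0, hy⟩
    obtain ⟨a', ha'⟩ := mem_iUnion.1 hmem
    have hin := inside a' y ha'.1 ha'.2
    have heq : b a' = a + b 0 := uniq hin.1 hin.2 hy.1 hy.2
    rw [hb0 a'] at heq
    have : a' = a := by omega
    rw [this] at ha'
    exact ⟨ha'.1, ha'.2⟩

theorem imgIoo {F : ℝ → ℝ} (hm : StrictMono F) (hs : Function.Surjective F) (u v : ℝ) :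
    F '' Ioo u v = Ioo (F u) (F v) := by
  have := (StrictMono.orderIsoOfSurjective F hm hs).image_Ioo u v
  simpa using this

theorem Ioo_endpoints {u v U V : ℝ} (huv : u < v) (heq : Ioo u v = Ioo U V) :
    u = U ∧ v = V := by
  have hUV : U < V := by
    obtain ⟨x, hx⟩ := nonempty_Ioo.2 huv
    rw [heq] at hx
    exact lt_trans hx.1 hx.2
  constructor
  · have := congrArg sInf heq
    rwa [csInf_Ioo huv, csInf_Ioo hUV] at this
  · have := congrArg sSup heq
    rwa [csSup_Ioo huv, csSup_Ioo hUV] at this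

variable {t : ℤ}

/-- Endpoint identities. -/
theorem Good.endL (h : Good n g d)
    (ht : ∀ a : ℤ, g '' Ioo (d (4*a+1)) (d (4*a+4)) = Ioo (d (4*(a+t)+2)) (d (4*(a+t)+3)))
    (a : ℤ) : g (d (4*a+1)) = d (4*(a+t)+2) := by
  have H := ht a
  rw [h.gIoo] at H
  exact (Ioo_endpoints (h.gmono (h.dmono (by omega))) H).1

theorem Good.endR (h : Good n g d)
    (ht : ∀ a : ℤ, g '' Ioo (d (4*a+1)) (d (4*a+4)) = Ioo (d (4*(a+t)+2)) (d (4*(a+t)+3)))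
    (a : ℤ) : g (d (4*a+4)) = d (4*(a+t)+3) := by
  have H := ht a
  rw [h.gIoo] at H
  exact (Ioo_endpoints (h.gmono (h.dmono (by omega))) H).2

theorem Good.plus_step (h : Good n g d)
    (ht : ∀ a : ℤ, g '' Ioo (d (4*a+1)) (d (4*a+4)) = Ioo (d (4*(a+t)+2)) (d (4*(a+t)+3)))
    (a : ℤ) : g '' Icc (d (4*a+2)) (d (4*a+3)) ⊆ Ioo (d (4*(a+t)+2)) (d (4*(a+t)+3)) := by
  intro y hy
  rw [← ht a]
  refine Set.image_mono (f := g) ?_ hy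
  exact Icc_subset_Ioo (h.dmono (by omega)) (h.dmono (by omega))

theorem Good.plus_iter (h : Good n g d)
    (ht : ∀ a : ℤ, g '' Ioo (d (4*a+1)) (d (4*a+4)) = Ioo (d (4*(a+t)+2)) (d (4*(a+t)+3))) :
    ∀ (k : ℕ) (a : ℤ), g^[k] '' Icc (d (4*a+2)) (d (4*a+3))
      ⊆ Icc (d (4*(a+(k:ℤ)*t)+2)) (d (4*(a+(k:ℤ)*t)+3)) := by
  intro k
  induction k with
  | zero => intro a; simp
  | succ i ih =>
      intro a
      have e : a + ((i+1:ℕ):ℤ)*t = (a+t) + (i:ℕ)*t := by push_cast; ring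
      rw [e, Function.iterate_succ, Set.image_comp]
      refine le_trans (Set.image_mono ((h.plus_step ht a).trans Ioo_subset_Icc_self)) ?_
      exact ih (a+t)

theorem fixed_point {G : ℝ → ℝ} (hG : Continuous G) {A B : ℝ} {r : ℝ} (hAB : A < B)
    (hsub : G '' Icc A B ⊆ Ioo (A + r) (B + r)) :
    ∃ x ∈ Ioo A B, G x = x + r := by
  have hA : G A - A - r > 0 := by
    have := hsub (mem_image_of_mem _ (left_mem_Icc.2 hAB.le))
    have := this.1; linarith
  have hB : G B - B - r < 0 := by
    have := hsub (mem_image_of_mem _ (right_mem_Icc.2 hAB.le))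
    have := this.2; linarith
  have hcont : Continuous (fun x => G x - x - r) :=
    (hG.sub continuous_id).sub continuous_const
  obtain ⟨x, hx, hfx⟩ := intermediate_value_Icc' hAB.le hcont.continuousOn
    (show (0:ℝ) ∈ Icc (G B - B - r) (G A - A - r) from ⟨hB.le, hA.le⟩)
  have hgx : G x = x + r := by dsimp at hfx; linarith
  refine ⟨x, ?_, hgx⟩
  have := hsub (mem_image_of_mem _ hx)
  rw [hgx] at this
  exact ⟨by linarith [this.1], by linarith [this.2]⟩

theorem Good.per_plus (h : Good n g d)
    (ht : ∀ a : ℤ, g '' Ioo (d (4*a+1)) (d (4*a+4)) = Ioo (d (4*(a+t)+2)) (d (4*(a+t)+3)))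
    (a : ℤ) : ∃ x ∈ Ioo (d (4*a+2)) (d (4*a+3)), g^[n] x = x + t := by
  have hAB : d (4*a+2) < d (4*a+3) := h.dmono (by omega)
  obtain ⟨m, hm⟩ : ∃ m : ℕ, n = m + 1 := ⟨n-1, by have := h.hn; omega⟩
  have hsub : g^[n] '' Icc (d (4*a+2)) (d (4*a+3))
      ⊆ Ioo (d (4*a+2) + t) (d (4*a+3) + t) := by
    rw [hm, Function.iterate_succ', Set.image_comp]
    have h1 := Set.image_mono (f := g) (h.plus_iter ht m a)
    have h2 := h1.trans (by
      have h3 := h.gIcc (d (4*(a+(m:ℤ)*t)+2)) (d (4*(a+(m:ℤ)*t)+3))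
      intro y hy
      exact h.plus_step ht (a+(m:ℤ)*t) hy)
    have e2 : d (4*((a+(m:ℤ)*t)+t)+2) = d (4*a+2) + t := by
      rw [show 4*((a+(m:ℤ)*t)+t)+2 = (4*a+2) + 4*(n:ℤ)*t by rw [hm]; push_cast; ring,
        h.dper_int]
    have e3 : d (4*((a+(m:ℤ)*t)+t)+3) = d (4*a+3) + t := by
      rw [show 4*((a+(m:ℤ)*t)+t)+3 = (4*a+3) + 4*(n:ℤ)*t by rw [hm]; push_cast; ring,
        h.dper_int]
    rw [e2, e3] at h2
    exact h2
  have hfix := fixed_point (h.gcont.iterate n) hAB hsub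
  obtain ⟨x, hx, hgx⟩ := hfix
  exact ⟨x, hx, hgx⟩


theorem iter_per {g : ℝ → ℝ} (hg : ∀ x : ℝ, g (x+1) = g x + 1) :
    ∀ (k : ℕ) (x : ℝ), g^[k] (x+1) = g^[k] x + 1 := by
  intro k
  induction k with
  | zero => intro x; simp
  | succ i ih =>
      intro x
      rw [Function.iterate_succ', Function.comp_apply, ih, hg]
      rfl

theorem Good.arch2 (h : Good n g d) (x : ℝ) : ∃ a : ℤ, d (4*a+2) ≤ x ∧ x < d (4*a+6) := by
  have hkey : ∀ m : ℤ, d (4*(n*m)+2) = d 2 + m := by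
    intro m
    have := h.dper_int 2 m
    rw [show (2:ℤ) + 4*n*m = 4*((n:ℤ)*m)+2 by ring] at this
    exact this
  have hinh : ∃ a : ℤ, d (4*a+2) ≤ x := by
    refine ⟨n * ⌊x - d 2⌋, ?_⟩
    rw [hkey]
    have := Int.floor_le (x - d 2)
    linarith
  have hbdd : ∃ b : ℤ, ∀ a : ℤ, d (4*a+2) ≤ x → a ≤ b := by
    refine ⟨n * (⌈x - d 2⌉ + 1), ?_⟩
    intro a ha
    by_contra hlt
    push_neg at hlt
    have h1 : d (4*((n:ℤ) * (⌈x - d 2⌉ + 1))+2) ≤ d (4*a+2) := le_of_lt (h.dmono (by omega))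
    rw [hkey] at h1
    have := Int.le_ceil (x - d 2)
    push_cast at h1
    linarith
  obtain ⟨a, ha, hmax⟩ := Int.exists_greatest_of_bdd hbdd hinh
  refine ⟨a, ha, ?_⟩
  by_contra hcon
  push_neg at hcon
  have : a + 1 ≤ a := hmax (a+1) (by rw [show 4*(a+1)+2 = 4*a+6 by ring]; exact hcon)
  omega

theorem Good.compl_eq2 (h : Good n g d) :
    (⋃ a : ℤ, Icc (d (4*a+2)) (d (4*a+3)))ᶜ = ⋃ a : ℤ, Ioo (d (4*a+3)) (d (4*a+6)) := by
  ext x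
  simp only [mem_compl_iff, mem_iUnion, mem_Icc, mem_Ioo, not_exists, not_and]
  constructor
  · intro hx
    obtain ⟨a, h1, h2⟩ := h.arch2 x
    have h3 : ¬ x ≤ d (4*a+3) := hx a h1
    push_neg at h3
    exact ⟨a, h3, h2⟩
  · rintro ⟨a, h1, h2⟩ b hb
    by_contra hle
    rcases le_or_gt b a with hba | hab
    · have : d (4*b+3) ≤ d (4*a+3) := h.dmono.monotone (by omega)
      linarith
    · have : d (4*a+6) ≤ d (4*b+2) := h.dmono.monotone (by omega)
      linarith

section Inverse

variable {g' : ℝ → ℝ}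

theorem Good.g'mono (h : Good n g d) (hgg' : ∀ x : ℝ, g (g' x) = x) : StrictMono g' := by
  intro x y hxy
  have : g (g' x) < g (g' y) := by rw [hgg', hgg']; exact hxy
  exact h.gmono.lt_iff_lt.1 this

theorem Good.minus_step (h : Good n g d)
    (ht : ∀ a : ℤ, g '' Ioo (d (4*a+1)) (d (4*a+4)) = Ioo (d (4*(a+t)+2)) (d (4*(a+t)+3)))
    (hgg' : ∀ x : ℝ, g (g' x) = x) (b : ℤ) :
    g' '' Icc (d (4*b)) (d (4*b+1)) ⊆ Ioo (d (4*(b-t))) (d (4*(b-t)+1)) := by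
  rintro y ⟨x, hx, rfl⟩
  have eL : g (d (4*(b-t))) = d (4*b-1) := by
    have H := h.endR ht (b-t-1)
    rw [show 4*(b-t-1)+4 = 4*(b-t) by ring] at H
    rw [show 4*((b-t-1)+t)+3 = 4*b-1 by ring] at H
    exact H
  have eR : g (d (4*(b-t)+1)) = d (4*b+2) := by
    have H := h.endL ht (b-t)
    rw [show 4*((b-t)+t)+2 = 4*b+2 by ring] at H
    exact H
  constructor
  · refine h.gmono.lt_iff_lt.1 ?_
    rw [hgg', eL]
    exact lt_of_lt_of_le (h.dmono (by omega)) hx.1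
  · refine h.gmono.lt_iff_lt.1 ?_
    rw [hgg', eR]
    exact lt_of_le_of_lt hx.2 (h.dmono (by omega))

theorem Good.minus_iter (h : Good n g d)
    (ht : ∀ a : ℤ, g '' Ioo (d (4*a+1)) (d (4*a+4)) = Ioo (d (4*(a+t)+2)) (d (4*(a+t)+3)))
    (hgg' : ∀ x : ℝ, g (g' x) = x) :
    ∀ (k : ℕ) (b : ℤ), g'^[k] '' Icc (d (4*b)) (d (4*b+1))
      ⊆ Icc (d (4*(b-(k:ℤ)*t))) (d (4*(b-(k:ℤ)*t)+1)) := by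
  intro k
  induction k with
  | zero => intro b; simp
  | succ i ih =>
      intro b
      have e : b - ((i+1:ℕ):ℤ)*t = (b-t) - (i:ℕ)*t := by push_cast; ring
      rw [e, Function.iterate_succ, Set.image_comp]
      refine le_trans (Set.image_mono ((h.minus_step ht hgg' b).trans Ioo_subset_Icc_self)) ?_
      exact ih (b-t)

theorem Good.per_minus (h : Good n g d)
    (ht : ∀ a : ℤ, g '' Ioo (d (4*a+1)) (d (4*a+4)) = Ioo (d (4*(a+t)+2)) (d (4*(a+t)+3)))
    (hgg' : ∀ x : ℝ, g (g' x) = x) (hg'g : ∀ x : ℝ, g' (g x) = x) (b : ℤ) :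
    ∃ x ∈ Ioo (d (4*b) - t) (d (4*b+1) - t), g^[n] x = x + t := by
  have hAB : d (4*b) < d (4*b+1) := h.dmono (by omega)
  have hg'cont : Continuous g' := by
    have := (StrictMono.orderIsoOfSurjective g' (h.g'mono hgg')
      (fun x => ⟨g x, hg'g x⟩)).continuous
    exact this
  obtain ⟨m, hm⟩ : ∃ m : ℕ, n = m + 1 := ⟨n-1, by have := h.hn; omega⟩
  have hsub : g'^[n] '' Icc (d (4*b)) (d (4*b+1))
      ⊆ Ioo (d (4*b) + (-t : ℝ)) (d (4*b+1) + (-t : ℝ)) := by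
    rw [hm, Function.iterate_succ', Set.image_comp]
    have h1 := Set.image_mono (f := g') (h.minus_iter ht hgg' m b)
    have h2 := h1.trans (h.minus_step ht hgg' (b-(m:ℤ)*t))
    have e2 : d (4*((b-(m:ℤ)*t)-t)) = d (4*b) + ((-t : ℤ) : ℝ) := by
      rw [show 4*((b-(m:ℤ)*t)-t) = (4*b) + 4*(n:ℤ)*(-t) by rw [hm]; push_cast; ring,
        h.dper_int]
    have e3 : d (4*((b-(m:ℤ)*t)-t)+1) = d (4*b+1) + ((-t : ℤ) : ℝ) := by
      rw [show 4*((b-(m:ℤ)*t)-t)+1 = (4*b+1) + 4*(n:ℤ)*(-t) by rw [hm]; push_cast; ring,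
        h.dper_int]
    rw [e2, e3] at h2
    push_cast at h2 ⊢
    exact h2
  obtain ⟨x, hx, hgx⟩ := fixed_point (hg'cont.iterate n) hAB hsub
  refine ⟨g'^[n] x, ?_, ?_⟩
  · rw [hgx]
    constructor
    · have := hx.1; linarith
    · have := hx.2; linarith
  · have hli : Function.LeftInverse (g^[n]) (g'^[n]) := Function.LeftInverse.iterate hgg' n
    rw [hli x, hgx]
    ring

theorem Good.inv_himg (h : Good n g d)
    (ht : ∀ a : ℤ, g '' Ioo (d (4*a+1)) (d (4*a+4)) = Ioo (d (4*(a+t)+2)) (d (4*(a+t)+3)))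
    (hgg' : ∀ x : ℝ, g (g' x) = x) (hg'g : ∀ x : ℝ, g' (g x) = x) :
    g' '' (⋃ a : ℤ, Icc (d (4*a+2)) (d (4*a+3)))ᶜ = ⋃ a : ℤ, Ioo (d (4*a+4)) (d (4*a+5)) := by
  rw [h.compl_eq2, Set.image_iUnion]
  have gi' : ∀ u v : ℝ, g' '' Ioo u v = Ioo (g' u) (g' v) :=
    imgIoo (h.g'mono hgg') (fun x => ⟨g x, hg'g x⟩)
  simp only [gi']
  have eL : ∀ a : ℤ, g' (d (4*a+3)) = d (4*(a-t)+4) := by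
    intro a
    have H := h.endR ht (a-t)
    rw [show 4*((a-t)+t)+3 = 4*a+3 by ring] at H
    rw [← H, hg'g]
  have eR : ∀ a : ℤ, g' (d (4*a+6)) = d (4*(a-t)+5) := by
    intro a
    have H := h.endL ht (a+1-t)
    rw [show 4*((a+1-t)+t)+2 = 4*a+6 by ring] at H
    rw [← H, hg'g, show 4*(a+1-t)+1 = 4*(a-t)+5 by ring]
  simp only [eL, eR]
  ext x
  simp only [mem_iUnion, mem_Ioo]
  constructor
  · rintro ⟨a, ha⟩
    exact ⟨a - t, ha⟩
  · rintro ⟨a, ha⟩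
    refine ⟨a + t, ?_⟩
    rw [show a+t-t = a by ring]
    exact ha

theorem Good.inv (h : Good n g d)
    (ht : ∀ a : ℤ, g '' Ioo (d (4*a+1)) (d (4*a+4)) = Ioo (d (4*(a+t)+2)) (d (4*(a+t)+3)))
    (hgg' : ∀ x : ℝ, g (g' x) = x) (hg'g : ∀ x : ℝ, g' (g x) = x) :
    Good n g' (fun k => d (k+2)) := by
  refine ⟨h.hn, ?_, ?_, h.g'mono hgg', fun x => ⟨g x, hg'g x⟩, ?_, ?_⟩
  · intro i j hij
    exact h.dmono (by omega)
  · intro k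
    show d (k + 4*(n:ℤ) + 2) = d (k+2) + 1
    rw [show k + 4*(n:ℤ) + 2 = (k+2) + 4*n by ring, h.dper]
  · intro x
    have : g (g' (x+1)) = g (g' x + 1) := by rw [hgg', h.gper, hgg']
    exact h.gmono.injective this
  · show g' '' (⋃ a : ℤ, Icc (d (4*a+2)) (d (4*a+1+2)))ᶜ = ⋃ a : ℤ, Ioo (d (4*a+2+2)) (d (4*a+3+2))
    simp only [show ∀ a : ℤ, 4*a+1+2 = 4*a+3 from fun a => by ring,
      show ∀ a : ℤ, 4*a+2+2 = 4*a+4 from fun a => by ring,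
      show ∀ a : ℤ, 4*a+3+2 = 4*a+5 from fun a => by ring]
    exact h.inv_himg ht hgg' hg'g

end Inverse


section Pow

/-- endpoint family for `g^[k]`. -/
noncomputable def dkfun (g : ℝ → ℝ) (d : ℤ → ℝ) (t : ℤ) (k : ℕ) : ℤ → ℝ :=
  fun i => if i % 4 ≤ 1 then d i else g^[k-1] (d (i - 4*((k-1:ℕ):ℤ)*t))

theorem Good.dk_bnd (h : Good n g d)
    (ht : ∀ a : ℤ, g '' Ioo (d (4*a+1)) (d (4*a+4)) = Ioo (d (4*(a+t)+2)) (d (4*(a+t)+3)))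
    (k : ℕ) (i : ℤ) (hi2 : i % 4 = 2 ∨ i % 4 = 3) :
    d (4*(i/4)+2) ≤ dkfun g d t k i ∧ dkfun g d t k i ≤ d (4*(i/4)+3) := by
  set a : ℤ := i / 4 with ha
  have hmem : d (i - 4*((k-1:ℕ):ℤ)*t) ∈
      Icc (d (4*(a-((k-1:ℕ):ℤ)*t)+2)) (d (4*(a-((k-1:ℕ):ℤ)*t)+3)) := by
    rcases hi2 with h2 | h2
    · have e : i - 4*((k-1:ℕ):ℤ)*t = 4*(a-((k-1:ℕ):ℤ)*t)+2 := by
        rw [show (4:ℤ)*(a-((k-1:ℕ):ℤ)*t)+2 = 4*a+2 - 4*((k-1:ℕ):ℤ)*t from by ring]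
        omega
      rw [e]
      exact ⟨le_refl _, (h.dmono (by omega)).le⟩
    · have e : i - 4*((k-1:ℕ):ℤ)*t = 4*(a-((k-1:ℕ):ℤ)*t)+3 := by
        rw [show (4:ℤ)*(a-((k-1:ℕ):ℤ)*t)+3 = 4*a+3 - 4*((k-1:ℕ):ℤ)*t from by ring]
        omega
      rw [e]
      exact ⟨(h.dmono (by omega)).le, le_refl _⟩
  have hsub := h.plus_iter ht (k-1) (a-((k-1:ℕ):ℤ)*t)
  have := hsub (mem_image_of_mem _ hmem)
  have e : a-((k-1:ℕ):ℤ)*t + ((k-1:ℕ):ℤ)*t = a := by ring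
  rw [e] at this
  have hdk : dkfun g d t k i = g^[k-1] (d (i - 4*((k-1:ℕ):ℤ)*t)) := by
    unfold dkfun
    rw [if_neg (by omega)]
  rw [hdk]
  exact ⟨this.1, this.2⟩

theorem Good.pow (h : Good n g d)
    (ht : ∀ a : ℤ, g '' Ioo (d (4*a+1)) (d (4*a+4)) = Ioo (d (4*(a+t)+2)) (d (4*(a+t)+3)))
    (k : ℕ) (hk : 1 ≤ k) : Good n (g^[k]) (dkfun g d t k) := by
  have hK : ((k-1:ℕ):ℤ) = (k:ℤ)-1 := by omega
  have hd0 : ∀ i : ℤ, i % 4 ≤ 1 → dkfun g d t k i = d i := by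
    intro i hi; unfold dkfun; rw [if_pos hi]
  have hd2 : ∀ i : ℤ, ¬ (i % 4 ≤ 1) → dkfun g d t k i = g^[k-1] (d (i - 4*((k-1:ℕ):ℤ)*t)) := by
    intro i hi; unfold dkfun; rw [if_neg hi]
  refine ⟨h.hn, ?_, ?_, h.gmono.iterate k, h.gsurj.iterate k, iter_per h.gper k, ?_⟩
  · -- strict mono
    refine strictMono_int_of_lt_succ ?_
    intro i
    have hcase : i % 4 = 0 ∨ i % 4 = 1 ∨ i % 4 = 2 ∨ i % 4 = 3 := by omega
    rcases hcase with hc | hc | hc | hc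
    · rw [hd0 i (by omega), hd0 (i+1) (by omega)]
      exact h.dmono (by omega)
    · rw [hd0 i (by omega)]
      have hb := h.dk_bnd ht k (i+1) (by omega)
      have e : 4*((i+1)/4)+2 = i+1 := by omega
      rw [e] at hb
      exact lt_of_lt_of_le (h.dmono (by omega)) hb.1
    · rw [hd2 i (by omega), hd2 (i+1) (by omega)]
      exact (h.gmono.iterate (k-1)) (h.dmono (by omega))
    · rw [hd0 (i+1) (by omega)]
      have hb := h.dk_bnd ht k i (by omega)
      have e : 4*(i/4)+3 = i := by omega
      rw [e] at hb
      exact lt_of_le_of_lt hb.2 (h.dmono (by omega))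
  · -- periodicity
    intro i
    by_cases hi : i % 4 ≤ 1
    · rw [hd0 i hi, hd0 (i+4*n) (by omega), h.dper]
    · rw [hd2 i hi, hd2 (i+4*n) (by omega)]
      rw [show i + 4*(n:ℤ) - 4*((k-1:ℕ):ℤ)*t = (i - 4*((k-1:ℕ):ℤ)*t) + 4*n by ring,
        h.dper, iter_per h.gper]
  · -- image equality
    have e0 : ∀ a : ℤ, dkfun g d t k (4*a) = d (4*a) := fun a => hd0 _ (by omega)
    have e1 : ∀ a : ℤ, dkfun g d t k (4*a+1) = d (4*a+1) := fun a => hd0 _ (by omega)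
    simp only [e0, e1]
    rw [h.compl_eq, Set.image_iUnion]
    obtain ⟨m, hm⟩ : ∃ m : ℕ, k = m + 1 := ⟨k-1, by omega⟩
    have him : ∀ a : ℤ, g^[k] '' Ioo (d (4*a+1)) (d (4*a+4))
        = Ioo (dkfun g d t k (4*(a+(k:ℤ)*t)+2)) (dkfun g d t k (4*(a+(k:ℤ)*t)+3)) := by
      intro a
      have hgk : g^[k] = g^[m] ∘ g := by rw [hm]; exact Function.iterate_succ g m
      rw [hgk, Set.image_comp, ht a,
        imgIoo (h.gmono.iterate m) (h.gsurj.iterate m)]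
      have hmK : ((k-1:ℕ):ℤ) = (m:ℤ) := by omega
      have i2 : dkfun g d t k (4*(a+(k:ℤ)*t)+2) = g^[m] (d (4*(a+t)+2)) := by
        rw [hd2 _ (by omega), hmK, show (4*(a+(k:ℤ)*t)+2) - 4*(m:ℤ)*t = 4*(a+t)+2 by
          rw [hm]; push_cast; ring]
        rw [hm]; simp
      have i3 : dkfun g d t k (4*(a+(k:ℤ)*t)+3) = g^[m] (d (4*(a+t)+3)) := by
        rw [hd2 _ (by omega), hmK, show (4*(a+(k:ℤ)*t)+3) - 4*(m:ℤ)*t = 4*(a+t)+3 by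
          rw [hm]; push_cast; ring]
        rw [hm]; simp
      rw [i2, i3]
    simp only [him]
    ext x
    simp only [mem_iUnion, mem_Ioo]
    constructor
    · rintro ⟨a, ha⟩
      exact ⟨a + (k:ℤ)*t, ha⟩
    · rintro ⟨a, ha⟩
      refine ⟨a - (k:ℤ)*t, ?_⟩
      rw [show a-(k:ℤ)*t+(k:ℤ)*t = a by ring]
      exact ha

end Pow


section Bridge

theorem U_Icc (hn : 0 < n) (D : ℤ → ℝ)
    (hper : ∀ j m : ℤ, D (j + 4*n*m) = D j + m) :
    ⋃ j : Fin n, liftedIcc (D (4*(j.1:ℤ))) (D (4*(j.1:ℤ)+1))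
      = ⋃ a : ℤ, Icc (D (4*a)) (D (4*a+1)) := by
  ext x
  simp only [liftedIcc, mem_iUnion, mem_Icc]
  constructor
  · rintro ⟨j, m, hx⟩
    refine ⟨(j.1:ℤ) + n*m, ?_, ?_⟩
    · rw [show 4*((j.1:ℤ) + n*m) = 4*(j.1:ℤ) + 4*n*m by ring, hper]
      exact hx.1
    · rw [show 4*((j.1:ℤ) + n*m)+1 = (4*(j.1:ℤ)+1) + 4*n*m by ring, hper]
      exact hx.2
  · rintro ⟨a, hx⟩
    have hn' : (0:ℤ) < n := by exact_mod_cast hn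
    have h0 : 0 ≤ a % n := Int.emod_nonneg a (by omega)
    have h1 : a % n < n := Int.emod_lt_of_pos a hn'
    refine ⟨⟨(a % (n:ℤ)).toNat, by omega⟩, a / n, ?_, ?_⟩
    · have hrep := Int.emod_add_mul_ediv a n
      have e : 4*(((((a % (n:ℤ)).toNat : ℕ)) : ℤ)) + 4*(n:ℤ)*(a / n) = 4*a := by
        rw [show ((((a % (n:ℤ)).toNat : ℕ)) : ℤ) = a % n from by omega]
        rw [show 4*(a % (n:ℤ)) + 4*(n:ℤ)*(a/n) = 4*((a % n) + n*(a/n)) by ring, hrep]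
      have := hper (4*(((a % (n:ℤ)).toNat : ℕ) : ℤ)) (a / n)
      rw [show 4*((((a % (n:ℤ)).toNat : ℕ)) : ℤ) + 4*(n:ℤ)*(a/n) = 4*a from e] at this
      rw [Fin.val_mk, ← this]
      exact hx.1
    · have hrep := Int.emod_add_mul_ediv a n
      have e : (4*(((((a % (n:ℤ)).toNat : ℕ)) : ℤ))+1) + 4*(n:ℤ)*(a / n) = 4*a+1 := by
        rw [show ((((a % (n:ℤ)).toNat : ℕ)) : ℤ) = a % n from by omega]
        rw [show (4*(a % (n:ℤ))+1) + 4*(n:ℤ)*(a/n) = 4*((a % n) + n*(a/n))+1 by ring, hrep]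
      have := hper (4*(((a % (n:ℤ)).toNat : ℕ) : ℤ)+1) (a / n)
      rw [e] at this
      rw [Fin.val_mk, ← this]
      exact hx.2

theorem U_Ioo (hn : 0 < n) (D : ℤ → ℝ)
    (hper : ∀ j m : ℤ, D (j + 4*n*m) = D j + m) :
    ⋃ j : Fin n, liftedIoo (D (4*(j.1:ℤ)+2)) (D (4*(j.1:ℤ)+3))
      = ⋃ a : ℤ, Ioo (D (4*a+2)) (D (4*a+3)) := by
  ext x
  simp only [liftedIoo, mem_iUnion, mem_Ioo]
  constructor
  · rintro ⟨j, m, hx⟩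
    refine ⟨(j.1:ℤ) + n*m, ?_, ?_⟩
    · rw [show 4*((j.1:ℤ) + n*m)+2 = (4*(j.1:ℤ)+2) + 4*n*m by ring, hper]
      exact hx.1
    · rw [show 4*((j.1:ℤ) + n*m)+3 = (4*(j.1:ℤ)+3) + 4*n*m by ring, hper]
      exact hx.2
  · rintro ⟨a, hx⟩
    have hn' : (0:ℤ) < n := by exact_mod_cast hn
    have h0 : 0 ≤ a % n := Int.emod_nonneg a (by omega)
    have h1 : a % n < n := Int.emod_lt_of_pos a hn'
    refine ⟨⟨(a % (n:ℤ)).toNat, by omega⟩, a / n, ?_, ?_⟩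
    · have hrep := Int.emod_add_mul_ediv a n
      have e : (4*(((((a % (n:ℤ)).toNat : ℕ)) : ℤ))+2) + 4*(n:ℤ)*(a / n) = 4*a+2 := by
        rw [show ((((a % (n:ℤ)).toNat : ℕ)) : ℤ) = a % n from by omega]
        rw [show (4*(a % (n:ℤ))+2) + 4*(n:ℤ)*(a/n) = 4*((a % n) + n*(a/n))+2 by ring, hrep]
      have := hper (4*(((a % (n:ℤ)).toNat : ℕ) : ℤ)+2) (a / n)
      rw [e] at this
      rw [Fin.val_mk, ← this]
      exact hx.1
    · have hrep := Int.emod_add_mul_ediv a n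
      have e : (4*(((((a % (n:ℤ)).toNat : ℕ)) : ℤ))+3) + 4*(n:ℤ)*(a / n) = 4*a+3 := by
        rw [show ((((a % (n:ℤ)).toNat : ℕ)) : ℤ) = a % n from by omega]
        rw [show (4*(a % (n:ℤ))+3) + 4*(n:ℤ)*(a/n) = 4*((a % n) + n*(a/n))+3 by ring, hrep]
      have := hper (4*(((a % (n:ℤ)).toNat : ℕ) : ℤ)+3) (a / n)
      rw [e] at this
      rw [Fin.val_mk, ← this]
      exact hx.2

theorem toSavage {G : ℝ → ℝ} {D : ℤ → ℝ} (h : Good n G D) (F : HomeoZR)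
    (hF : F.toFun = G) : SavageData n F (fun i => D (i.1 : ℤ)) := by
  have hper : ∀ j m : ℤ, D (j + 4*n*m) = D j + m := fun j m => h.dper_int j m
  refine ⟨?_, ?_, ?_⟩
  · intro i j hij
    exact h.dmono (by have := Fin.lt_def.1 hij; exact_mod_cast this)
  · intro i j
    calc D (i.1:ℤ) < D ((j.1:ℤ) + 4*n) := h.dmono (by have := i.2; omega)
      _ = D (j.1:ℤ) + 1 := h.dper (j.1:ℤ)
  · show F.toFun '' (⋃ j : Fin n,
        liftedIcc (D ((4*j.1 : ℕ) : ℤ)) (D ((4*j.1+1 : ℕ) : ℤ)))ᶜ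
      = ⋃ j : Fin n, liftedIoo (D ((4*j.1+2 : ℕ) : ℤ)) (D ((4*j.1+3 : ℕ) : ℤ))
    have c0 : ∀ j : Fin n, ((4*j.1 : ℕ) : ℤ) = 4*(j.1:ℤ) := fun j => by push_cast; ring
    have c1 : ∀ j : Fin n, ((4*j.1+1 : ℕ) : ℤ) = 4*(j.1:ℤ)+1 := fun j => by push_cast; ring
    have c2 : ∀ j : Fin n, ((4*j.1+2 : ℕ) : ℤ) = 4*(j.1:ℤ)+2 := fun j => by push_cast; ring
    have c3 : ∀ j : Fin n, ((4*j.1+3 : ℕ) : ℤ) = 4*(j.1:ℤ)+3 := fun j => by push_cast; ring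
    simp only [c0, c1, c2, c3]
    rw [hF, U_Icc h.hn D hper, U_Ioo h.hn D hper]
    exact h.himg

end Bridge


theorem npow_toFun (F : HomeoZR) : ∀ m : ℕ, (F.npow m).toFun = F.toFun^[m]
  | 0 => rfl
  | m+1 => by
      show (F.npow m).toFun ∘ F.toFun = F.toFun^[m+1]
      rw [npow_toFun F m, ← Function.iterate_succ]

theorem build_good (hn : 0 < n) (f : HomeoZR) (c : Fin (4*n) → ℝ)
    (hc : SavageData n f c) :
    ∃ d : ℤ → ℝ, Good n f.toFun d ∧ (∀ (i : ℕ) (hi : i < 4*n), d (i:ℤ) = c ⟨i, hi⟩) := by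
  obtain ⟨hcm, hcw, hci⟩ := hc
  have h4 : (0:ℤ) < ((4*n : ℕ) : ℤ) := by exact_mod_cast (by omega : 0 < 4*n)
  set M : ℤ := ((4*n : ℕ) : ℤ) with hM
  have pf : ∀ k : ℤ, (k % M).toNat < 4*n := by
    intro k
    have h0 : 0 ≤ k % M := Int.emod_nonneg k (by omega)
    have h1 : k % M < M := Int.emod_lt_of_pos k h4
    omega
  set d : ℤ → ℝ := fun k => c ⟨(k % M).toNat, pf k⟩ + ((k / M : ℤ) : ℝ) with hd
  have dval : ∀ (x q : ℤ) (h0 : 0 ≤ x) (h1 : x < M),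
      d (x + M*q) = c ⟨x.toNat, by omega⟩ + (q : ℝ) := by
    intro x q h0 h1
    have r1 : (x + M*q) % M = x := by
      rw [Int.add_mul_emod_self_left, Int.emod_eq_of_lt h0 h1]
    have r2 : (x + M*q) / M = q := by
      rw [Int.add_mul_ediv_left x q (by omega : M ≠ 0), Int.ediv_eq_zero_of_lt h0 h1, zero_add]
    rw [hd]
    simp only [r1, r2]
  have hval : ∀ (i : ℕ) (hi : i < 4*n), d (i:ℤ) = c ⟨i, hi⟩ := by
    intro i hi
    have h2 := dval i 0 (by omega) (by omega)
    rw [mul_zero, add_zero] at h2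
    rw [h2, Int.cast_zero, add_zero]
    congr 1
  have decomp : ∀ k : ℤ, ∃ q r, 0 ≤ r ∧ r < M ∧ k = r + M*q := by
    intro k
    exact ⟨k / M, k % M, Int.emod_nonneg k (by omega), Int.emod_lt_of_pos k h4,
      by have := Int.emod_add_mul_ediv k M; linarith⟩
  have dmono : StrictMono d := by
    refine strictMono_int_of_lt_succ ?_
    intro k
    obtain ⟨q, r, h0, h1, hk⟩ := decomp k
    subst hk
    by_cases hr : r + 1 < M
    · rw [dval r q h0 h1, show r + M*q + 1 = (r+1) + M*q by ring,
        dval (r+1) q (by omega) hr]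
      have : c ⟨r.toNat, by omega⟩ < c ⟨(r+1).toNat, by omega⟩ := hcm (by
        rw [Fin.lt_def]; simp only [Fin.val_mk]; omega)
      linarith
    · rw [dval r q h0 h1, show r + M*q + 1 = 0 + M*(q+1) by
        have hrM : r = M - 1 := by omega
        rw [hrM]; ring, dval 0 (q+1) (by omega) (by omega)]
      have hw := hcw ⟨r.toNat, by omega⟩ ⟨(0:ℤ).toNat, by omega⟩
      push_cast at hw ⊢
      linarith
  have dper : ∀ k : ℤ, d (k + 4*(n:ℤ)) = d k + 1 := by
    intro k
    obtain ⟨q, r, h0, h1, hk⟩ := decomp k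
    subst hk
    rw [show r + M*q + 4*(n:ℤ) = r + M*(q+1) by rw [hM]; push_cast; ring,
      dval r (q+1) h0 h1, dval r q h0 h1]
    push_cast
    ring
  have hper : ∀ j m : ℤ, d (j + 4*n*m) = d j + m := by
    intro j m
    induction m using Int.induction_on with
    | zero => simp
    | succ i ih =>
        rw [show j + 4*(n:ℤ)*((i:ℤ)+1) = (j + 4*n*i) + 4*n by ring, dper, ih]
        push_cast; ring
    | pred i ih =>
        have := dper (j + 4*(n:ℤ)*(-(i:ℤ)-1))
        rw [show j + 4*(n:ℤ)*(-(i:ℤ)-1) + 4*(n:ℤ) = j + 4*n*(-(i:ℤ)) by ring] at this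
        rw [this] at ih
        push_cast at ih ⊢
        linarith
  have hv0 : ∀ j : Fin n, d (4*(j.1:ℤ)) = c ⟨4*j.1, by have := j.2; omega⟩ := by
    intro j
    rw [show (4*(j.1:ℤ)) = ((4*j.1 : ℕ) : ℤ) from by push_cast; ring]
    exact hval (4*j.1) (by have := j.2; omega)
  have hv1 : ∀ j : Fin n, d (4*(j.1:ℤ)+1) = c ⟨4*j.1+1, by have := j.2; omega⟩ := by
    intro j
    rw [show (4*(j.1:ℤ)+1) = ((4*j.1+1 : ℕ) : ℤ) from by push_cast; ring]
    exact hval (4*j.1+1) (by have := j.2; omega)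
  have hv2 : ∀ j : Fin n, d (4*(j.1:ℤ)+2) = c ⟨4*j.1+2, by have := j.2; omega⟩ := by
    intro j
    rw [show (4*(j.1:ℤ)+2) = ((4*j.1+2 : ℕ) : ℤ) from by push_cast; ring]
    exact hval (4*j.1+2) (by have := j.2; omega)
  have hv3 : ∀ j : Fin n, d (4*(j.1:ℤ)+3) = c ⟨4*j.1+3, by have := j.2; omega⟩ := by
    intro j
    rw [show (4*(j.1:ℤ)+3) = ((4*j.1+3 : ℕ) : ℤ) from by push_cast; ring]
    exact hval (4*j.1+3) (by have := j.2; omega)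
  refine ⟨d, ⟨hn, dmono, dper, f.strictMono,
    fun y => ⟨f.invFun y, f.right_inv y⟩, f.map_add_one, ?_⟩, hval⟩
  rw [← U_Icc hn d hper, ← U_Ioo hn d hper]
  simp only [hv0, hv1, hv2, hv3]
  exact hci

end SavAux

/-- Observation 3.5. If `f` is `n`-savage then so is `f^k` for every
nonzero integer `k`; moreover `rot(fⁿ) = 0` and `f` has a periodic point in each of the
intervals `Iⱼ⁻` and `Iⱼ⁺`. -/
theorem savage_properties (n : ℕ) (hn : 0 < n) (f : HomeoZR)
    (c : Fin (4 * n) → ℝ) (hc : SavageData n f c) :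
    (∀ k : ℤ, k ≠ 0 → IsSavage n (f.zpow k)) ∧
    (∃ m : ℤ, (f.npow n).transNum = (m : ℝ)) ∧
    (∀ j : Fin n,
      (∃ x ∈ f.Per,
        x ∈ liftedIoo (c ⟨4 * j.1, by have := j.2; omega⟩)
          (c ⟨4 * j.1 + 1, by have := j.2; omega⟩)) ∧
      (∃ x ∈ f.Per,
        x ∈ liftedIoo (c ⟨4 * j.1 + 2, by have := j.2; omega⟩)
          (c ⟨4 * j.1 + 3, by have := j.2; omega⟩))) := by
  obtain ⟨d, hgood, hval⟩ := SavAux.build_good hn f c hc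
  obtain ⟨t, ht⟩ := hgood.exists_t0
  refine ⟨?_, ?_, ?_⟩
  · -- powers are savage
    intro k hk
    rcases lt_or_gt_of_ne hk with hneg | hpos
    · have hinv : SavAux.Good n f.invFun (fun k => d (k+2)) :=
        hgood.inv ht f.right_inv f.left_inv
      obtain ⟨t2, ht2⟩ := hinv.exists_t0
      have hzf : (f.zpow k).toFun = f.invFun^[(-k).toNat] := by
        have hz : f.zpow k = f.symm.npow (-k).toNat := by
          simp only [HomeoZR.zpow, if_neg (show ¬ (0:ℤ) ≤ k by omega)]
        rw [hz, SavAux.npow_toFun]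
        rfl
      exact ⟨_, SavAux.toSavage (hinv.pow ht2 (-k).toNat (by omega)) (f.zpow k) hzf⟩
    · have hzf : (f.zpow k).toFun = f.toFun^[k.toNat] := by
        have hz : f.zpow k = f.npow k.toNat := by
          simp only [HomeoZR.zpow, if_pos (show (0:ℤ) ≤ k by omega)]
        rw [hz, SavAux.npow_toFun]
      exact ⟨_, SavAux.toSavage (hgood.pow ht k.toNat (by omega)) (f.zpow k) hzf⟩
  · -- integer rotation number for f^n
    obtain ⟨x, hx, hfx⟩ := hgood.per_plus ht 0
    refine ⟨t, ?_⟩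
    show (f.npow n).toLift.translationNumber = (t:ℝ)
    have hcont : Continuous ⇑(f.npow n).toLift := by
      show Continuous (f.npow n).toFun
      rw [SavAux.npow_toFun]
      exact hgood.gcont.iterate n
    refine ((f.npow n).toLift.translationNumber_eq_int_iff hcont).2 ⟨x, ?_⟩
    show (f.npow n).toFun x = x + (t:ℝ)
    rw [SavAux.npow_toFun]
    exact hfx
  · intro j
    have hj := j.2
    have e0 : c ⟨4*j.1, by omega⟩ = d (4*(j.1:ℤ)) := by
      rw [← hval (4*j.1) (by omega)]
      congr 1
    have e1 : c ⟨4*j.1+1, by omega⟩ = d (4*(j.1:ℤ)+1) := by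
      rw [← hval (4*j.1+1) (by omega)]
      congr 1
    have e2 : c ⟨4*j.1+2, by omega⟩ = d (4*(j.1:ℤ)+2) := by
      rw [← hval (4*j.1+2) (by omega)]
      congr 1
    have e3 : c ⟨4*j.1+3, by omega⟩ = d (4*(j.1:ℤ)+3) := by
      rw [← hval (4*j.1+3) (by omega)]
      congr 1
    constructor
    · obtain ⟨y, hy, hfy⟩ := hgood.per_minus ht f.right_inv f.left_inv (j.1:ℤ)
      refine ⟨y, ⟨n, hn, t, hfy⟩, Set.mem_iUnion.2 ⟨-t, ?_⟩⟩
      rw [e0, e1]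
      push_cast
      constructor
      · have := hy.1; linarith
      · have := hy.2; linarith
    · obtain ⟨x2, hx2, hfx2⟩ := hgood.per_plus ht (j.1:ℤ)
      refine ⟨x2, ⟨n, hn, t, hfx2⟩, Set.mem_iUnion.2 ⟨0, ?_⟩⟩
      rw [e2, e3]
      push_cast
      constructor
      · have := hx2.1; linarith
      · have := hx2.2; linarith
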